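/- Let s > 1 and let (f_ε)_{ε∈(0,1)} be a net of smooth compactly supported functions on ℝ^m such that for some C₁ > 0, k₁ > 0, k₂ > 0 and ε₀ ∈ (0,1): |f̂_ε(ξ)| ≤ C₁·exp(k₁·ε^{−1/(2s-1)} − k₂·|ξ|^{1/s}) for all ξ ∈ ℝ^m and all ε ≤ ε₀. Then there exists C > 0 such that |∂^α f_ε(x)| ≤ C^{|α|+1}·(α!)^s·exp(k₁·ε^{−1/(2s-1)}) for all multi-indices α, all x ∈ ℝ^m and all ε ≤ ε₀. -/

import Mathlib

open MeasureTheory Pointwise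

noncomputable def pd (m : ℕ) (j : Fin m) (f : (Fin m → ℝ) → ℂ) : (Fin m → ℝ) → ℂ :=
  fun x => fderiv ℝ f x (Pi.single j 1)

/-- Iterated partial derivative `∂^α` associated with a multi-index `α ∈ ℤ₊^m`. -/
noncomputable def pdm (m : ℕ) (α : Fin m → ℕ) (f : (Fin m → ℝ) → ℂ) : (Fin m → ℝ) → ℂ :=
  (List.finRange m).foldr (fun j g => (pd m j)^[α j] g) f

/-- `|α| = α₁ + ⋯ + α_m` for a multi-index. -/
def msize {m : ℕ} (α : Fin m → ℕ) : ℕ := ∑ i, α i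

/-- `α! = α₁! ⋯ α_m!` for a multi-index. -/
def mfact {m : ℕ} (α : Fin m → ℕ) : ℕ := ∏ i, Nat.factorial (α i)

/-- Euclidean norm on `ℝ^m` realized as `Fin m → ℝ`. -/
noncomputable def eunorm {m : ℕ} (x : Fin m → ℝ) : ℝ := Real.sqrt (∑ i, (x i) ^ 2)

/-- Fourier transform `f̂(ξ) = ∫ e^{-i⟨x,ξ⟩} f(x) dx`. -/
noncomputable def FT (m : ℕ) (f : (Fin m → ℝ) → ℂ) (ξ : Fin m → ℝ) : ℂ :=
  ∫ x : Fin m → ℝ, Complex.exp (-(Complex.I * ((∑ i, x i * ξ i : ℝ) : ℂ))) * f x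


open FourierTransform Real

lemma pow_le_factorial_mul_exp {t : ℝ} (ht : 0 ≤ t) (M : ℕ) :
    t ^ M ≤ (M.factorial : ℝ) * Real.exp t := by
  have h := Real.pow_div_factorial_le_exp t ht M
  have hM : (0:ℝ) < M.factorial := by positivity
  rw [div_le_iff₀ hM] at h
  calc t ^ M ≤ Real.exp t * M.factorial := h
  _ = _ := mul_comm _ _

lemma gevrey_pointwise {s k₂ : ℝ} (hs : 1 < s) (hk₂ : 0 < k₂) (M : ℕ) {u : ℝ} (hu : 0 ≤ u) :
    u ^ M * Real.exp (-(k₂ * u ^ (1/s))) ≤ ((M.factorial : ℝ) * (s / k₂) ^ M) ^ s := by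
  have hs0 : (0:ℝ) < s := by linarith
  set t : ℝ := u ^ (1/s) with htdef
  have ht : 0 ≤ t := Real.rpow_nonneg hu _
  set c : ℝ := k₂ / s with hcdef
  have hc : 0 < c := by positivity
  have h1 : u ^ M = (t ^ M * Real.exp (-(c * t))) ^ s * Real.exp (k₂ * t) := by
    have htM : (t ^ M : ℝ) ^ s = u ^ (M : ℕ) := by
      rw [← Real.rpow_natCast t M, ← Real.rpow_mul hu, ← Real.rpow_natCast u M,
        ← Real.rpow_mul hu]
      congr 1
      field_simp
    rw [Real.mul_rpow (by positivity) (Real.exp_nonneg _), htM, ← Real.exp_mul]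
    have hcs : c * s = k₂ := div_mul_cancel₀ k₂ (ne_of_gt hs0)
    have : -(c * t) * s = -(k₂ * t) := by linear_combination (-t) * hcs
    rw [this, mul_assoc, ← Real.exp_add]
    simp
  have h2 : t ^ M * Real.exp (-(c * t)) ≤ (M.factorial : ℝ) * (s / k₂) ^ M := by
    have h3 := pow_le_factorial_mul_exp (t := c * t) (by positivity) M
    have hcM : (0:ℝ) < c ^ M := by positivity
    rw [mul_pow] at h3
    have h4 : t ^ M ≤ (M.factorial : ℝ) * Real.exp (c * t) / c ^ M := by
      rw [le_div_iff₀ hcM]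
      calc t ^ M * c ^ M = c ^ M * t ^ M := by ring
      _ ≤ _ := h3
    calc t ^ M * Real.exp (-(c * t)) ≤ ((M.factorial : ℝ) * Real.exp (c * t) / c ^ M) *
          Real.exp (-(c * t)) := by
          exact mul_le_mul_of_nonneg_right h4 (Real.exp_nonneg _)
    _ = (M.factorial : ℝ) * (c ^ M)⁻¹ * (Real.exp (c*t) * Real.exp (-(c*t))) := by ring
    _ = (M.factorial : ℝ) * (c ^ M)⁻¹ := by rw [← Real.exp_add]; simp
    _ = (M.factorial : ℝ) * (s / k₂) ^ M := by
        rw [← inv_pow]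
        congr 2
        rw [hcdef]
        field_simp
  have hexp : Real.exp (-(k₂ * u ^ (1/s))) = Real.exp (-(k₂ * t)) := rfl
  calc u ^ M * Real.exp (-(k₂ * u ^ (1/s)))
      = (t ^ M * Real.exp (-(c * t))) ^ s * (Real.exp (k₂ * t) * Real.exp (-(k₂ * t))) := by
        rw [hexp, h1]; ring
    _ = (t ^ M * Real.exp (-(c * t))) ^ s := by rw [← Real.exp_add]; simp
    _ ≤ ((M.factorial : ℝ) * (s / k₂) ^ M) ^ s :=
        Real.rpow_le_rpow (by positivity) h2 hs0.le

lemma one_add_rpow_le {s : ℝ} (hs : 1 < s) {r : ℝ} (hr : 0 ≤ r) :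
    (1 + r) ^ (1/s) ≤ 1 + r ^ (1/s) := by
  have hp0 : (0:ℝ) ≤ 1/s := by positivity
  have hp1 : 1/s ≤ 1 := by rw [div_le_one (by linarith)]; linarith
  have h := NNReal.rpow_add_le_add_rpow 1 r.toNNReal hp0 hp1
  have h2 := NNReal.coe_le_coe.2 h
  push_cast at h2
  rwa [Real.coe_toNNReal r hr, Real.one_rpow] at h2

lemma main_pointwise {s k₂ : ℝ} (hs : 1 < s) (hk₂ : 0 < k₂) (m N : ℕ) {r : ℝ} (hr : 0 ≤ r) :
    r ^ N * Real.exp (-(k₂ * r ^ (1/s))) * (1 + r) ^ (m+1) ≤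
      Real.exp k₂ * (((N+m+1).factorial : ℝ) * (s / k₂) ^ (N+m+1)) ^ s := by
  have h1 : r ^ N * (1+r) ^ (m+1) ≤ (1+r) ^ (N+m+1) := by
    have : (1+r) ^ (N+m+1) = (1+r) ^ N * (1+r) ^ (m+1) := by
      rw [← pow_add, Nat.add_assoc]
    rw [this]
    exact mul_le_mul_of_nonneg_right (pow_le_pow_left₀ hr (by linarith) N) (by positivity)
  have h2 : Real.exp (-(k₂ * r ^ (1/s))) ≤ Real.exp k₂ * Real.exp (-(k₂ * (1+r) ^ (1/s))) := by
    rw [← Real.exp_add]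
    apply Real.exp_le_exp.2
    have := one_add_rpow_le hs hr
    nlinarith
  calc r ^ N * Real.exp (-(k₂ * r ^ (1/s))) * (1 + r) ^ (m+1)
      = (r ^ N * (1+r) ^ (m+1)) * Real.exp (-(k₂ * r ^ (1/s))) := by ring
    _ ≤ (1+r) ^ (N+m+1) * (Real.exp k₂ * Real.exp (-(k₂ * (1+r) ^ (1/s)))) := by
        apply mul_le_mul h1 h2 (Real.exp_nonneg _) (by positivity)
    _ = Real.exp k₂ * ((1+r) ^ (N+m+1) * Real.exp (-(k₂ * (1+r) ^ (1/s)))) := by ring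
    _ ≤ Real.exp k₂ * (((N+m+1).factorial : ℝ) * (s / k₂) ^ (N+m+1)) ^ s := by
        exact mul_le_mul_of_nonneg_left
          (gevrey_pointwise hs hk₂ (N+m+1) (by linarith)) (Real.exp_nonneg _)

lemma choose_le_two_pow' (n k : ℕ) : n.choose k ≤ 2 ^ n := by
  by_cases h : k ≤ n
  · calc n.choose k ≤ ∑ i ∈ Finset.range (n+1), n.choose i :=
        Finset.single_le_sum (f := fun i => n.choose i) (fun _ _ => Nat.zero_le _)
          (Finset.mem_range.2 (Nat.lt_succ_of_le h))
    _ = 2 ^ n := Nat.sum_range_choose n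
  · rw [Nat.choose_eq_zero_of_lt (Nat.lt_of_not_le h)]
    exact Nat.zero_le _

lemma add_factorial_le (a b : ℕ) :
    (a + b).factorial ≤ 2 ^ (a+b) * (a.factorial * b.factorial) := by
  calc (a+b).factorial = (a+b).choose b * a.factorial * b.factorial :=
      (Nat.add_choose_mul_factorial_mul_factorial a b).symm
  _ ≤ 2 ^ (a+b) * a.factorial * b.factorial := by
      exact Nat.mul_le_mul_right _ (Nat.mul_le_mul_right _ (choose_le_two_pow' _ _))
  _ = _ := by ring

lemma factorial_sum_le {m : ℕ} (α : Fin m → ℕ) (t : Finset (Fin m)) :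
    (∑ i ∈ t, α i).factorial ≤ 2 ^ (t.card * ∑ i ∈ t, α i) * ∏ i ∈ t, (α i).factorial := by
  classical
  induction t using Finset.induction with
  | empty => simp
  | insert a t ha ih =>
    rw [Finset.sum_insert ha, Finset.prod_insert ha, Finset.card_insert_of_notMem ha]
    calc (α a + ∑ i ∈ t, α i).factorial
        ≤ 2 ^ (α a + ∑ i ∈ t, α i) * ((α a).factorial * (∑ i ∈ t, α i).factorial) :=
          add_factorial_le _ _
      _ ≤ 2 ^ (α a + ∑ i ∈ t, α i) * ((α a).factorial *
            (2 ^ (t.card * ∑ i ∈ t, α i) * ∏ i ∈ t, (α i).factorial)) := by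
          exact Nat.mul_le_mul_left _ (Nat.mul_le_mul_left _ ih)
      _ = 2 ^ ((α a + ∑ i ∈ t, α i) + t.card * ∑ i ∈ t, α i) *
            ((α a).factorial * ∏ i ∈ t, (α i).factorial) := by
          rw [pow_add]; ring
      _ ≤ 2 ^ ((t.card + 1) * (α a + ∑ i ∈ t, α i)) *
            ((α a).factorial * ∏ i ∈ t, (α i).factorial) := by
          apply Nat.mul_le_mul_right
          apply Nat.pow_le_pow_right (by norm_num)
          nlinarith [Nat.zero_le (α a), Nat.zero_le (∑ i ∈ t, α i), Nat.zero_le t.card]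

def toE {m : ℕ} (x : Fin m → ℝ) : EuclideanSpace ℝ (Fin m) := WithLp.toLp 2 x

lemma integral_euclidean_eq {m : ℕ} (F : (Fin m → ℝ) → ℂ) :
    ∫ x : Fin m → ℝ, F x = ∫ v : EuclideanSpace ℝ (Fin m), F v :=
  ((EuclideanSpace.volume_preserving_symm_measurableEquiv_toLp (Fin m)).integral_comp
    (MeasurableEquiv.toLp 2 (Fin m → ℝ)).symm.measurableEmbedding F).symm

lemma eunorm_eq {m : ℕ} (x : Fin m → ℝ) : eunorm x = ‖toE x‖ := by
  rw [EuclideanSpace.norm_eq]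
  unfold eunorm
  congr 1
  apply Finset.sum_congr rfl
  intro i _
  rw [Real.norm_eq_abs, sq_abs]
  rfl

lemma FT_eq {m : ℕ} (g : (Fin m → ℝ) → ℂ) (ξ : Fin m → ℝ) :
    FT m g ξ = 𝓕 (fun v : EuclideanSpace ℝ (Fin m) => g v) ((2 * π)⁻¹ • toE ξ) := by
  rw [Real.fourier_eq, FT, integral_euclidean_eq]
  congr 1
  funext v
  have hinner : (inner ℝ v ((2*π)⁻¹ • toE ξ) : ℝ) = (2*π)⁻¹ * ∑ i, v i * ξ i := by
    rw [PiLp.inner_apply, Finset.mul_sum]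
    apply Finset.sum_congr rfl
    intro i _
    rw [RCLike.inner_apply, conj_trivial]
    show ((2*π)⁻¹ * ξ i) * v i = _
    ring
  rw [Circle.smul_def, Real.fourierChar_apply, hinner, smul_eq_mul]
  congr 1
  have hπ : (2 * π) * (2*π)⁻¹ = 1 := mul_inv_cancel₀ (by positivity)
  rw [show 2 * π * -((2*π)⁻¹ * ∑ i, v i * ξ i) = -∑ i, v i * ξ i by
    field_simp]
  push_cast
  ring

lemma FT_pd {m : ℕ} {g : (Fin m → ℝ) → ℂ} (hg : ContDiff ℝ (⊤ : ℕ∞) g)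
    (hcs : HasCompactSupport g) (j : Fin m) (ξ : Fin m → ℝ) :
    FT m (pd m j g) ξ = (Complex.I * (ξ j : ℂ)) * FT m g ξ := by
  classical
  set E := EuclideanSpace ℝ (Fin m)
  set e : E ≃L[ℝ] (Fin m → ℝ) := PiLp.continuousLinearEquiv 2 ℝ (fun _ : Fin m => ℝ) with he
  set g' : E → ℂ := fun v => g v with hg'def
  have hge : g' = g ∘ e := rfl
  have hg' : ContDiff ℝ (⊤ : ℕ∞) g' := hg.comp (e.contDiff)
  have hcs' : HasCompactSupport g' := hcs.comp_homeomorph e.toHomeomorph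
  have hInt : Integrable g' := hg'.continuous.integrable_of_hasCompactSupport hcs'
  have hdiff : Differentiable ℝ g' := hg'.differentiable (by simp)
  have hfd_cont : Continuous (fderiv ℝ g') := (hg'.fderiv_right (m := (⊤:ℕ∞)) (by exact_mod_cast le_top)).continuous
  have hfd_cs : HasCompactSupport (fderiv ℝ g') := hcs'.fderiv ℝ
  have hIntF : Integrable (fderiv ℝ g') := hfd_cont.integrable_of_hasCompactSupport hfd_cs
  have key : 𝓕 (fderiv ℝ g') = VectorFourier.fourierSMulRight (-innerSL ℝ) (𝓕 g') :=
    Real.fourier_fderiv hInt hdiff hIntF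
  set u : E := toE (Pi.single j 1) with hu
  have hpt : ∀ v : E, pd m j g v = fderiv ℝ g' v u := by
    intro v
    have : fderiv ℝ g' v = (fderiv ℝ g (e v)).comp (e : E →L[ℝ] (Fin m → ℝ)) := by
      rw [hge]
      exact e.comp_right_fderiv
    rw [this]
    rfl
  set w : E := (2 * π)⁻¹ • toE ξ with hw
  have step1 : FT m (pd m j g) ξ = 𝓕 (fun v : E => fderiv ℝ g' v u) w := by
    rw [FT_eq]
    congr 1
    rw [show (fun v : E => pd m j g v) = (fun v : E => fderiv ℝ g' v u) from funext hpt]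
  have step2 : 𝓕 (fun v : E => fderiv ℝ g' v u) w = (𝓕 (fderiv ℝ g') w) u := by
    rw [Real.fourier_eq, Real.fourier_eq]
    have hIntS : Integrable (fun v : E => (𝐞 (-(inner ℝ v w : ℝ)) : Circle) • fderiv ℝ g' v) := by
      exact (VectorFourier.fourierIntegral_convergent_iff (e := Real.fourierChar)
        (L := (innerₗ E)) Real.continuous_fourierChar continuous_inner w).2 hIntF
    rw [ContinuousLinearMap.integral_apply hIntS u]
    congr 1
  have hinner_wu : (inner ℝ w u : ℝ) = (2 * π)⁻¹ * ξ j := by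
    rw [PiLp.inner_apply]
    simp only [RCLike.inner_apply, conj_trivial]
    have : ∀ i : Fin m, u i * w i = (if i = j then (2*π)⁻¹ * ξ i else 0) := by
      intro i
      have hwi : w i = (2*π)⁻¹ * ξ i := rfl
      have hui : u i = (Pi.single j (1:ℝ) : Fin m → ℝ) i := rfl
      rw [hwi, hui]
      by_cases h : i = j
      · subst h; simp [Pi.single_apply]
      · simp [Pi.single_apply, h]
    rw [Finset.sum_congr rfl (fun i _ => this i)]
    simp
  have step3 : (𝓕 (fderiv ℝ g') w) u = (Complex.I * (ξ j : ℂ)) * 𝓕 g' w := by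
    rw [key]
    rw [VectorFourier.fourierSMulRight_apply]
    simp only [ContinuousLinearMap.neg_apply, innerSL_apply_apply, hinner_wu]
    rw [show ((innerSL ℝ) w) u = (2 * π)⁻¹ * ξ j from hinner_wu]
    rw [Complex.real_smul, smul_eq_mul]
    have hπ : (π : ℂ) ≠ 0 := Complex.ofReal_ne_zero.2 Real.pi_ne_zero
    push_cast
    field_simp
  rw [step1, step2, step3, FT_eq]

lemma pd_contDiff {m : ℕ} {g : (Fin m → ℝ) → ℂ} (hg : ContDiff ℝ (⊤:ℕ∞) g) (j : Fin m) :
    ContDiff ℝ (⊤:ℕ∞) (pd m j g) :=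
  (hg.fderiv_right (m := (⊤:ℕ∞)) (by exact_mod_cast le_top)).clm_apply contDiff_const

lemma pd_hcs {m : ℕ} {g : (Fin m → ℝ) → ℂ} (hcs : HasCompactSupport g) (j : Fin m) :
    HasCompactSupport (pd m j g) :=
  (hcs.fderiv ℝ).comp_left (g := fun L : (Fin m → ℝ) →L[ℝ] ℂ => L (Pi.single j 1)) rfl

lemma pd_iter {m : ℕ} (j : Fin m) (n : ℕ) :
    ∀ {g : (Fin m → ℝ) → ℂ}, ContDiff ℝ (⊤:ℕ∞) g → HasCompactSupport g →
    (ContDiff ℝ (⊤:ℕ∞) ((pd m j)^[n] g) ∧ HasCompactSupport ((pd m j)^[n] g) ∧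
     ∀ ξ, FT m ((pd m j)^[n] g) ξ = (Complex.I * (ξ j:ℂ))^n * FT m g ξ) := by
  induction n with
  | zero => exact fun hg hcs => ⟨hg, hcs, fun ξ => by simp⟩
  | succ n ih =>
    intro g hg hcs
    obtain ⟨h1, h2, h3⟩ := ih (pd_contDiff hg j) (pd_hcs hcs j)
    rw [Function.iterate_succ_apply]
    exact ⟨h1, h2, fun ξ => by rw [h3 ξ, FT_pd hg hcs j ξ]; ring⟩

lemma FT_foldr {m : ℕ} (α : Fin m → ℕ) (l : List (Fin m)) :
    ∀ {g : (Fin m → ℝ) → ℂ}, ContDiff ℝ (⊤:ℕ∞) g → HasCompactSupport g →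
    (ContDiff ℝ (⊤:ℕ∞) (l.foldr (fun j h => (pd m j)^[α j] h) g) ∧
     HasCompactSupport (l.foldr (fun j h => (pd m j)^[α j] h) g) ∧
     ∀ ξ, FT m (l.foldr (fun j h => (pd m j)^[α j] h) g) ξ =
        (l.map (fun j => (Complex.I * (ξ j:ℂ))^(α j))).prod * FT m g ξ) := by
  induction l with
  | nil => exact fun hg hcs => ⟨hg, hcs, fun ξ => by simp⟩
  | cons j l ih =>
    intro g hg hcs
    obtain ⟨h1, h2, h3⟩ := ih hg hcs
    obtain ⟨h1', h2', h3'⟩ := pd_iter j (α j) h1 h2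
    refine ⟨h1', h2', fun ξ => ?_⟩
    rw [List.foldr_cons, h3' ξ, h3 ξ, List.map_cons, List.prod_cons]
    ring

lemma pdm_props {m : ℕ} (α : Fin m → ℕ) {g : (Fin m → ℝ) → ℂ}
    (hg : ContDiff ℝ (⊤:ℕ∞) g) (hcs : HasCompactSupport g) :
    ContDiff ℝ (⊤:ℕ∞) (pdm m α g) ∧ HasCompactSupport (pdm m α g) ∧
    ∀ ξ, FT m (pdm m α g) ξ = (∏ j, (Complex.I * (ξ j:ℂ))^(α j)) * FT m g ξ := by
  obtain ⟨h1, h2, h3⟩ := FT_foldr α (List.finRange m) hg hcs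
  exact ⟨h1, h2, fun ξ => by rw [pdm, h3 ξ, ← Fin.prod_univ_def]⟩

lemma abs_coord_le_eunorm {m : ℕ} (x : Fin m → ℝ) (j : Fin m) : |x j| ≤ eunorm x := by
  rw [← Real.sqrt_sq_eq_abs, eunorm]
  apply Real.sqrt_le_sqrt
  exact Finset.single_le_sum (f := fun i => (x i)^2) (fun i _ => sq_nonneg _) (Finset.mem_univ j)

lemma eunorm_nonneg {m : ℕ} (x : Fin m → ℝ) : 0 ≤ eunorm x := Real.sqrt_nonneg _

lemma abs_prod_le {m : ℕ} (α : Fin m → ℕ) (ξ : Fin m → ℝ) :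
    ‖∏ j, (Complex.I * (ξ j:ℂ))^(α j)‖ ≤ eunorm ξ ^ msize α := by
  rw [norm_prod]
  have h : ∀ j ∈ Finset.univ, ‖(Complex.I * (ξ j:ℂ))^(α j)‖ ≤ (eunorm ξ) ^ (α j) := by
    intro j _
    rw [norm_pow, norm_mul, Complex.norm_I, one_mul, Complex.norm_real, Real.norm_eq_abs]
    exact pow_le_pow_left₀ (abs_nonneg _) (abs_coord_le_eunorm ξ j) _
  calc ∏ j, ‖(Complex.I * (ξ j:ℂ))^(α j)‖ ≤ ∏ j, (eunorm ξ) ^ (α j) :=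
      Finset.prod_le_prod (fun j _ => norm_nonneg _) h
  _ = eunorm ξ ^ msize α := by rw [msize, Finset.prod_pow_eq_pow_sum]

lemma FT_continuous {m : ℕ} {g : (Fin m → ℝ) → ℂ} (hg : Continuous g)
    (hcs : HasCompactSupport g) :
    Continuous (𝓕 (fun v : EuclideanSpace ℝ (Fin m) => g v)) := by
  have hg' : Continuous (fun v : EuclideanSpace ℝ (Fin m) => g v) :=
    hg.comp (PiLp.continuousLinearEquiv 2 ℝ (fun _ : Fin m => ℝ)).continuous
  have hcs' : HasCompactSupport (fun v : EuclideanSpace ℝ (Fin m) => g v) :=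
    hcs.comp_homeomorph (PiLp.continuousLinearEquiv 2 ℝ (fun _ : Fin m => ℝ)).toHomeomorph
  exact VectorFourier.fourierIntegral_continuous Real.continuous_fourierChar
    continuous_inner (hg'.integrable_of_hasCompactSupport hcs')

lemma sup_bound {m : ℕ} {g : (Fin m → ℝ) → ℂ} (hg : Continuous g)
    (hcs : HasCompactSupport g)
    (hFTint : Integrable (𝓕 (fun v : EuclideanSpace ℝ (Fin m) => g v)))
    (x : Fin m → ℝ) :
    ‖g x‖ ≤ ∫ w : EuclideanSpace ℝ (Fin m), ‖𝓕 (fun v : EuclideanSpace ℝ (Fin m) => g v) w‖ := by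
  set g' : EuclideanSpace ℝ (Fin m) → ℂ := fun v => g v with hg'def
  have hg' : Continuous g' :=
    hg.comp (PiLp.continuousLinearEquiv 2 ℝ (fun _ : Fin m => ℝ)).continuous
  have hcs' : HasCompactSupport g' :=
    hcs.comp_homeomorph (PiLp.continuousLinearEquiv 2 ℝ (fun _ : Fin m => ℝ)).toHomeomorph
  have hInt : Integrable g' := hg'.integrable_of_hasCompactSupport hcs'
  have hinv := hInt.fourierInv_fourier_eq hFTint (hg'.continuousAt (x := toE x))
  have hx : g x = 𝓕 (𝓕 g') (-(toE x)) := by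
    rw [← Real.fourierInv_eq_fourier_neg, hinv]
    rfl
  rw [hx]
  exact VectorFourier.norm_fourierIntegral_le_integral_norm _ _ _ _ _


lemma pow_rpow_comm {x : ℝ} (hx : 0 ≤ x) (n : ℕ) (y : ℝ) : (x^n)^y = (x^y)^n := by
  rw [← Real.rpow_natCast x n, ← Real.rpow_mul hx, mul_comm, Real.rpow_mul hx,
    Real.rpow_natCast]

set_option maxHeartbeats 2000000 in
/-- conversely, exponential Fourier decay `exp(-k₂|ξ|^{1/s})` implies
uniform Gevrey-`s` bounds on all derivatives. -/
theorem regular_of_fourier_decay (m : ℕ) (hm : 0 < m) (s : ℝ) (hs : 1 < s)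
    (f : ℝ → (Fin m → ℝ) → ℂ)
    (hsm : ∀ ε ∈ Set.Ioo (0:ℝ) 1, ContDiff ℝ (⊤ : ℕ∞) (f ε))
    (hcs : ∀ ε ∈ Set.Ioo (0:ℝ) 1, HasCompactSupport (f ε))
    (C₁ k₁ k₂ : ℝ) (hC₁ : 0 < C₁) (hk₁ : 0 < k₁) (hk₂ : 0 < k₂)
    (ε₀ : ℝ) (hε₀ : ε₀ ∈ Set.Ioo (0:ℝ) 1)
    (hFT : ∀ ξ : Fin m → ℝ, ∀ ε ∈ Set.Ioo (0:ℝ) 1, ε ≤ ε₀ →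
      ‖FT m (f ε) ξ‖ ≤
        C₁ * Real.exp (k₁ * ε ^ (-1 / (2 * s - 1)) - k₂ * eunorm ξ ^ (1 / s))) :
    ∃ C > (0:ℝ), ∀ (α : Fin m → ℕ) (x : Fin m → ℝ), ∀ ε ∈ Set.Ioo (0:ℝ) 1, ε ≤ ε₀ →
      ‖pdm m α (f ε) x‖ ≤
        C ^ (msize α + 1) * (mfact α : ℝ) ^ s * Real.exp (k₁ * ε ^ (-1 / (2 * s - 1))) := by
  have hs0 : (0:ℝ) < s := by linarith
  have h2π1 : (1:ℝ) ≤ 2 * Real.pi := by nlinarith [Real.pi_gt_three]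
  have h2π0 : (0:ℝ) < 2 * Real.pi := by linarith
  have hfr : ((Module.finrank ℝ (EuclideanSpace ℝ (Fin m)) : ℝ)) < (m:ℝ)+1 := by
    rw [finrank_euclideanSpace_fin]; linarith
  have hmaj : Integrable (fun w : EuclideanSpace ℝ (Fin m) => ((1:ℝ) + ‖w‖) ^ (-((m:ℝ)+1))) :=
    integrable_one_add_norm hfr
  set A : ℝ := ∫ w : EuclideanSpace ℝ (Fin m), ((1:ℝ) + ‖w‖) ^ (-((m:ℝ)+1)) with hAdef
  have hA0 : 0 ≤ A := integral_nonneg (fun w => Real.rpow_nonneg (by positivity) _)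
  set c₂ : ℝ := max (s / k₂) 1 with hc₂def
  have hc₂1 : (1:ℝ) ≤ c₂ := le_max_right _ _
  have hc₂0 : (0:ℝ) < c₂ := lt_of_lt_of_le one_pos hc₂1
  set B₀ : ℝ := 2^(m+1) * c₂^(m+1) * (((m+1).factorial : ℕ) : ℝ) with hB₀
  set B₁ : ℝ := 2^(m+1) * c₂ with hB₁
  have hB₀0 : (0:ℝ) < B₀ := by positivity
  have hB₁0 : (0:ℝ) < B₁ := by positivity
  set P₀ : ℝ := C₁ * Real.exp k₂ * A * B₀ ^ s with hP₀
  set P₁ : ℝ := (2*Real.pi) * B₁ ^ s with hP₁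
  have hP₀0 : (0:ℝ) ≤ P₀ := by positivity
  have hP₁0 : (0:ℝ) ≤ P₁ := by positivity
  set C : ℝ := max 1 (max P₀ P₁) with hC
  have hC1 : (1:ℝ) ≤ C := le_max_left _ _
  have hC0 : (0:ℝ) < C := lt_of_lt_of_le one_pos hC1
  have hCP₀ : P₀ ≤ C := le_trans (le_max_left _ _) (le_max_right _ _)
  have hCP₁ : P₁ ≤ C := le_trans (le_max_right _ _) (le_max_right _ _)
  refine ⟨C, hC0, ?_⟩
  intro α x ε hε hεε₀
  set N := msize α with hN
  have hNs : ∑ i, α i = N := rfl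
  have hmf : ∏ i, (α i).factorial = mfact α := rfl
  have hmf0 : (0:ℝ) ≤ (mfact α : ℝ) := Nat.cast_nonneg _
  have hsmF : ContDiff ℝ (⊤:ℕ∞) (f ε) := hsm ε hε
  have hcsF : HasCompactSupport (f ε) := hcs ε hε
  obtain ⟨hG1, hG2, hG3⟩ := pdm_props α hsmF hcsF
  set G := pdm m α (f ε) with hG
  set K : ℝ := C₁ * Real.exp (k₁ * ε ^ (-1 / (2 * s - 1))) with hK
  have hK0 : (0:ℝ) ≤ K := by positivity
  set Q : ℝ := Real.exp k₂ * (((N+m+1).factorial : ℝ) * (s / k₂) ^ (N+m+1)) ^ s with hQ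
  have hQ0 : (0:ℝ) ≤ Q := by positivity
  have hrpow : ∀ r : ℝ, 0 ≤ r → ((1:ℝ)+r) ^ (-((m:ℝ)+1)) = ((((1:ℝ)+r))^(m+1))⁻¹ := by
    intro r hr
    rw [show -((m:ℝ)+1) = -(((m+1:ℕ)):ℝ) by push_cast; ring,
      Real.rpow_neg (by linarith), Real.rpow_natCast]
  -- pointwise bound on the Fourier transform of G
  have hpt : ∀ w : EuclideanSpace ℝ (Fin m),
      ‖𝓕 (fun v : EuclideanSpace ℝ (Fin m) => G v) w‖ ≤
        K * (2*Real.pi)^N * Q * ((1:ℝ) + ‖w‖) ^ (-((m:ℝ)+1)) := by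
    intro w
    set ξw : Fin m → ℝ := fun i => (2*Real.pi) * w i with hξw
    have htoE : toE ξw = (2*Real.pi) • w := by ext i; rfl
    have hsm2 : ((2*Real.pi)⁻¹ : ℝ) • toE ξw = w := by
      rw [htoE, smul_smul, inv_mul_cancel₀ (ne_of_gt h2π0), one_smul]
    have hFTw : 𝓕 (fun v : EuclideanSpace ℝ (Fin m) => G v) w = FT m G ξw := by
      rw [FT_eq, hsm2]
    have heun : eunorm ξw = (2*Real.pi) * ‖w‖ := by
      rw [eunorm_eq, htoE, norm_smul, Real.norm_eq_abs, abs_of_pos h2π0]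
    have hw0 : (0:ℝ) ≤ ‖w‖ := norm_nonneg _
    have h1 : ‖FT m G ξw‖ ≤ eunorm ξw ^ N * ‖FT m (f ε) ξw‖ := by
      rw [hG3 ξw, norm_mul]
      exact mul_le_mul_of_nonneg_right (abs_prod_le α ξw) (norm_nonneg _)
    have h2 : ‖FT m (f ε) ξw‖ ≤
        K * Real.exp (-(k₂ * eunorm ξw ^ (1/s))) := by
      have := hFT ξw ε hε hεε₀
      rw [Real.exp_sub] at this
      calc ‖FT m (f ε) ξw‖
          ≤ C₁ * (Real.exp (k₁ * ε ^ (-1 / (2 * s - 1))) / Real.exp (k₂ * eunorm ξw ^ (1 / s))) := this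
        _ = K * Real.exp (-(k₂ * eunorm ξw ^ (1/s))) := by
            rw [hK, Real.exp_neg]; ring
    have h3 : Real.exp (-(k₂ * eunorm ξw ^ (1/s))) ≤ Real.exp (-(k₂ * ‖w‖ ^ (1/s))) := by
      apply Real.exp_le_exp.2
      have hle : ‖w‖ ^ (1/s) ≤ eunorm ξw ^ (1/s) := by
        rw [heun]
        apply Real.rpow_le_rpow hw0 _ (by positivity)
        nlinarith
      nlinarith
    have h4 : ‖w‖ ^ N * Real.exp (-(k₂ * ‖w‖ ^ (1/s))) ≤
        Q * ((1:ℝ) + ‖w‖) ^ (-((m:ℝ)+1)) := by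
      have hmp := main_pointwise hs hk₂ m N hw0
      have hpow0 : (0:ℝ) < ((1:ℝ)+‖w‖)^(m+1) := by positivity
      rw [hrpow ‖w‖ hw0, ← div_eq_mul_inv, le_div_iff₀ hpow0]
      exact hmp
    calc ‖𝓕 (fun v : EuclideanSpace ℝ (Fin m) => G v) w‖
        = ‖FT m G ξw‖ := by rw [hFTw]
      _ ≤ eunorm ξw ^ N * ‖FT m (f ε) ξw‖ := h1
      _ ≤ eunorm ξw ^ N * (K * Real.exp (-(k₂ * eunorm ξw ^ (1/s)))) := by
          exact mul_le_mul_of_nonneg_left h2 (pow_nonneg (eunorm_nonneg ξw) N)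
      _ = K * ((2*Real.pi)^N * (‖w‖^N * Real.exp (-(k₂ * eunorm ξw ^ (1/s))))) := by
          rw [heun, mul_pow]; ring
      _ ≤ K * ((2*Real.pi)^N * (‖w‖^N * Real.exp (-(k₂ * ‖w‖ ^ (1/s))))) := by
          apply mul_le_mul_of_nonneg_left _ hK0
          apply mul_le_mul_of_nonneg_left _ (by positivity)
          exact mul_le_mul_of_nonneg_left h3 (by positivity)
      _ ≤ K * ((2*Real.pi)^N * (Q * ((1:ℝ) + ‖w‖) ^ (-((m:ℝ)+1)))) := by
          apply mul_le_mul_of_nonneg_left _ hK0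
          exact mul_le_mul_of_nonneg_left h4 (by positivity)
      _ = K * (2*Real.pi)^N * Q * ((1:ℝ) + ‖w‖) ^ (-((m:ℝ)+1)) := by ring
  have hmaj' : Integrable (fun w : EuclideanSpace ℝ (Fin m) =>
      K * (2*Real.pi)^N * Q * ((1:ℝ)+‖w‖) ^ (-((m:ℝ)+1))) := hmaj.const_mul _
  have hFTint : Integrable (𝓕 (fun v : EuclideanSpace ℝ (Fin m) => G v)) := by
    apply hmaj'.mono' ((FT_continuous hG1.continuous hG2).aestronglyMeasurable)
    exact Filter.Eventually.of_forall (fun w => by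
      have := hpt w
      have h0 : (0:ℝ) ≤ K * (2*Real.pi)^N * Q * ((1:ℝ)+‖w‖) ^ (-((m:ℝ)+1)) := by
        have : (0:ℝ) ≤ ((1:ℝ)+‖w‖) ^ (-((m:ℝ)+1)) := Real.rpow_nonneg (by positivity) _
        positivity
      calc ‖𝓕 (fun v : EuclideanSpace ℝ (Fin m) => G v) w‖ ≤ _ := hpt w)
  have hsup := sup_bound hG1.continuous hG2 hFTint x
  have hIntLe : (∫ w : EuclideanSpace ℝ (Fin m),
      ‖𝓕 (fun v : EuclideanSpace ℝ (Fin m) => G v) w‖) ≤ K * (2*Real.pi)^N * Q * A := by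
    calc (∫ w : EuclideanSpace ℝ (Fin m), ‖𝓕 (fun v : EuclideanSpace ℝ (Fin m) => G v) w‖)
        ≤ ∫ w : EuclideanSpace ℝ (Fin m),
            K * (2*Real.pi)^N * Q * ((1:ℝ)+‖w‖) ^ (-((m:ℝ)+1)) :=
          integral_mono hFTint.norm hmaj' hpt
      _ = K * (2*Real.pi)^N * Q * A := by
          rw [hAdef, ← MeasureTheory.integral_const_mul]
  -- combinatorial bound on Q
  have hinner : ((N+m+1).factorial : ℝ) * (s/k₂)^(N+m+1) ≤ B₀ * B₁^N * (mfact α : ℝ) := by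
    have hf1 : ((N+m+1).factorial : ℝ) ≤
        2^(N+m+1) * ((N.factorial : ℝ) * (((m+1).factorial : ℕ) : ℝ)) := by
      have h := add_factorial_le N (m+1)
      have he : N + (m+1) = N+m+1 := by omega
      rw [he] at h
      exact_mod_cast h
    have hf2 : (N.factorial : ℝ) ≤ 2^(m*N) * (mfact α : ℝ) := by
      have h := factorial_sum_le α Finset.univ
      rw [Finset.card_univ, Fintype.card_fin, hNs, hmf] at h
      exact_mod_cast h
    have hsk : (s/k₂) ≤ c₂ := le_max_left _ _
    have hsk0 : (0:ℝ) ≤ s/k₂ := by positivity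
    calc ((N+m+1).factorial : ℝ) * (s/k₂)^(N+m+1)
        ≤ (2^(N+m+1) * ((N.factorial : ℝ) * (((m+1).factorial : ℕ) : ℝ))) * c₂^(N+m+1) := by
          apply mul_le_mul hf1 (pow_le_pow_left₀ hsk0 hsk _) (by positivity) (by positivity)
      _ ≤ (2^(N+m+1) * ((2^(m*N) * (mfact α : ℝ)) * (((m+1).factorial : ℕ) : ℝ))) * c₂^(N+m+1) := by
          apply mul_le_mul_of_nonneg_right _ (by positivity)
          apply mul_le_mul_of_nonneg_left _ (by positivity)
          exact mul_le_mul_of_nonneg_right hf2 (by positivity)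
      _ = B₀ * B₁^N * (mfact α : ℝ) := by
          rw [hB₀, hB₁]
          rw [show N+m+1 = (m+1)+N by omega, pow_add, pow_add, mul_pow, pow_mul]
          ring
  have hQle : Q ≤ Real.exp k₂ * (B₀^s * (B₁^s)^N * (mfact α : ℝ)^s) := by
    rw [hQ]
    apply mul_le_mul_of_nonneg_left _ (Real.exp_nonneg _)
    calc (((N+m+1).factorial : ℝ) * (s/k₂)^(N+m+1))^s
        ≤ (B₀ * B₁^N * (mfact α : ℝ))^s := Real.rpow_le_rpow (by positivity) hinner hs0.le
      _ = B₀^s * (B₁^s)^N * (mfact α : ℝ)^s := by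
          rw [Real.mul_rpow (by positivity) hmf0, Real.mul_rpow hB₀0.le (by positivity),
            pow_rpow_comm hB₁0.le]
  -- final assembly
  have hfinal : K * (2*Real.pi)^N * Q * A ≤
      C ^ (N + 1) * (mfact α : ℝ) ^ s * Real.exp (k₁ * ε ^ (-1 / (2 * s - 1))) := by
    have hstep : K * (2*Real.pi)^N * Q * A ≤
        (P₀ * P₁^N) * ((mfact α : ℝ)^s * Real.exp (k₁ * ε ^ (-1 / (2 * s - 1)))) := by
      calc K * (2*Real.pi)^N * Q * A
          ≤ K * (2*Real.pi)^N * (Real.exp k₂ * (B₀^s * (B₁^s)^N * (mfact α : ℝ)^s)) * A := by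
            apply mul_le_mul_of_nonneg_right _ hA0
            exact mul_le_mul_of_nonneg_left hQle (by positivity)
        _ = (P₀ * P₁^N) * ((mfact α : ℝ)^s * Real.exp (k₁ * ε ^ (-1 / (2 * s - 1)))) := by
            rw [hP₀, hP₁, hK, mul_pow]
            ring
    have hpow : P₀ * P₁^N ≤ C ^ (N+1) := by
      calc P₀ * P₁^N ≤ C * C^N :=
        mul_le_mul hCP₀ (pow_le_pow_left₀ hP₁0 hCP₁ N) (by positivity) hC0.le
      _ = C ^ (N+1) := by rw [pow_succ]; ring
    calc K * (2*Real.pi)^N * Q * A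
        ≤ (P₀ * P₁^N) * ((mfact α : ℝ)^s * Real.exp (k₁ * ε ^ (-1 / (2 * s - 1)))) := hstep
      _ ≤ C ^ (N+1) * ((mfact α : ℝ)^s * Real.exp (k₁ * ε ^ (-1 / (2 * s - 1)))) := by
          apply mul_le_mul_of_nonneg_right hpow (by positivity)
      _ = C ^ (N + 1) * (mfact α : ℝ) ^ s * Real.exp (k₁ * ε ^ (-1 / (2 * s - 1))) := by ring
  calc ‖pdm m α (f ε) x‖ = ‖G x‖ := by rw [hG]
    _ ≤ ∫ w : EuclideanSpace ℝ (Fin m), ‖𝓕 (fun v : EuclideanSpace ℝ (Fin m) => G v) w‖ := hsup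
    _ ≤ K * (2*Real.pi)^N * Q * A := hIntLe
    _ ≤ C ^ (N + 1) * (mfact α : ℝ) ^ s * Real.exp (k₁ * ε ^ (-1 / (2 * s - 1))) := hfinal
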